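/- If M is a chain transitive component of the discrete-time flow generated by g, then the stable set of S¹ ×_g M under the skew-product flow φᵗ equals S¹ ×_g st(M), where st(M) is the stable set of M under g. -/

import Mathlib

open Filter

/-- An `(ε, S)`-chain from `x` to `y` for `σ`, with respect to the distance function `d`. -/
def IsChainFrom {U T : Type*} (d : U → U → ℝ) (σ : T → U → U) (S : Set T)
    (ε : U → ℝ) (x y : U) : Prop :=
  ∃ k : ℕ, ∃ ts : Fin (k + 1) → T, ∃ xs : Fin (k + 2) → U,
    xs 0 = x ∧ xs (Fin.last (k + 1)) = y ∧ (∀ i, ts i ∈ S) ∧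
    ∀ i : Fin (k + 1),
      d (xs i.succ) (σ (ts i) (xs i.castSucc)) < ε (σ (ts i) (xs i.castSucc))

/-- Chain equivalence via `(ε,t)`-chains with positive continuous `ε`. -/
def ChainEquiv {U T : Type*} [TopologicalSpace U] (d : U → U → ℝ) (σ : T → U → U)
    (Times : ℝ → Set T) (x y : U) : Prop :=
  ∀ ε : U → ℝ, Continuous ε → (∀ u, 0 < ε u) → ∀ t : ℝ, 0 < t →
    IsChainFrom d σ (Times t) ε x y ∧ IsChainFrom d σ (Times t) ε y x

/-- The chain transitive components. -/
def ChainComponents {U T : Type*} [TopologicalSpace U] (d : U → U → ℝ) (σ : T → U → U)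
    (Times : ℝ → Set T) : Set (Set U) :=
  {C | ∃ x, ChainEquiv d σ Times x x ∧
    C = {y | ChainEquiv d σ Times y y ∧ ChainEquiv d σ Times x y}}

/-! ### Auxiliary chain machinery -/

section NChainSec

open Set

def NChain {U T : Type*} (d : U → U → ℝ) (σ : T → U → U) (S : Set T)
    (ε : U → ℝ) (x y : U) : Prop :=
  ∃ k : ℕ, ∃ ts : ℕ → T, ∃ xs : ℕ → U,
    xs 0 = x ∧ xs (k + 1) = y ∧ (∀ i ≤ k, ts i ∈ S) ∧
    ∀ i ≤ k, d (xs (i+1)) (σ (ts i) (xs i)) < ε (σ (ts i) (xs i))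

theorem nchain_iff {U T : Type*} (d : U → U → ℝ) (σ : T → U → U) (S : Set T)
    (ε : U → ℝ) (x y : U) : NChain d σ S ε x y ↔ IsChainFrom d σ S ε x y := by
  constructor
  · rintro ⟨k, ts, xs, h0, hl, hS, hd⟩
    refine ⟨k, fun i => ts i.val, fun i => xs i.val, by simpa using h0, by simpa using hl,
      fun i => hS i.val (by omega), fun i => ?_⟩
    simpa [Fin.val_succ, Fin.coe_castSucc] using hd i.val i.is_le
  · rintro ⟨k, ts, xs, h0, hl, hS, hd⟩
    refine ⟨k, fun i => ts ⟨min i k, by omega⟩, fun i => xs ⟨min i (k+1), by omega⟩,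
      ?_, ?_, fun i hi => hS _, fun i hi => ?_⟩
    · simpa using h0
    · simp only [min_self]
      rw [← hl]; rfl
    · have h1 : (⟨min (i+1) (k+1), by omega⟩ : Fin (k+2)) = (⟨min i k, by omega⟩ : Fin (k+1)).succ := by
        simp [Fin.ext_iff, Fin.succ]
      have h2 : (⟨min i (k+1), by omega⟩ : Fin (k+2)) = (⟨min i k, by omega⟩ : Fin (k+1)).castSucc := by
        simp [Fin.ext_iff, Fin.castSucc]; omega
      simp only [h1, h2]
      exact hd _

theorem nchain_concat {U T : Type*} {d : U → U → ℝ} {σ : T → U → U} {S : Set T}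
    {ε : U → ℝ} {x y z : U} (h1 : NChain d σ S ε x y) (h2 : NChain d σ S ε y z) :
    NChain d σ S ε x z := by
  obtain ⟨k1, ts1, xs1, a0, al, aS, ad⟩ := h1
  obtain ⟨k2, ts2, xs2, b0, bl, bS, bd⟩ := h2
  refine ⟨k1 + 1 + k2, fun i => if i ≤ k1 then ts1 i else ts2 (i - (k1+1)),
    fun i => if i ≤ k1 then xs1 i else xs2 (i - (k1+1)), ?_, ?_, ?_, ?_⟩
  · simpa using a0
  · have : ¬ (k1 + 1 + k2 + 1 ≤ k1) := by omega
    simp only [this, if_false]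
    have : k1 + 1 + k2 + 1 - (k1+1) = k2 + 1 := by omega
    rw [this, bl]
  · intro i hi
    by_cases h : i ≤ k1
    · simp [h]; exact aS i h
    · simp [h]; exact bS _ (by omega)
  · intro i hi
    by_cases h : i ≤ k1
    · have e1 : (if i ≤ k1 then xs1 i else xs2 (i - (k1+1))) = xs1 i := by simp [h]
      have e2 : (if i + 1 ≤ k1 then xs1 (i+1) else xs2 (i + 1 - (k1+1))) = xs1 (i+1) := by
        by_cases h' : i + 1 ≤ k1
        · simp [h']
        · have : i + 1 = k1 + 1 := by omega
          simp [h', this, b0, ← al]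
      simp only [h, if_true] at e1 ⊢
      rw [e2]
      exact ad i h
    · have e1 : ¬ (i + 1 ≤ k1) := by omega
      simp only [h, e1, if_false]
      have e3 : i + 1 - (k1 + 1) = (i - (k1+1)) + 1 := by omega
      rw [e3]
      exact bd _ (by omega)

theorem isChainFrom_concat {U T : Type*} {d : U → U → ℝ} {σ : T → U → U} {S : Set T}
    {ε : U → ℝ} {x y z : U} (h1 : IsChainFrom d σ S ε x y) (h2 : IsChainFrom d σ S ε y z) :
    IsChainFrom d σ S ε x z :=
  (nchain_iff _ _ _ _ _ _).mp
    (nchain_concat ((nchain_iff _ _ _ _ _ _).mpr h1) ((nchain_iff _ _ _ _ _ _).mpr h2))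

theorem chainEquiv_symm {U T : Type*} [TopologicalSpace U] {d : U → U → ℝ} {σ : T → U → U}
    {Tm : ℝ → Set T} {x y : U} (h : ChainEquiv d σ Tm x y) : ChainEquiv d σ Tm y x :=
  fun ε hc hp t ht => ⟨(h ε hc hp t ht).2, (h ε hc hp t ht).1⟩

theorem chainEquiv_trans {U T : Type*} [TopologicalSpace U] {d : U → U → ℝ} {σ : T → U → U}
    {Tm : ℝ → Set T} {x y z : U} (h1 : ChainEquiv d σ Tm x y) (h2 : ChainEquiv d σ Tm y z) :
    ChainEquiv d σ Tm x z := by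
  intro ε hc hp t ht
  obtain ⟨a1, a2⟩ := h1 ε hc hp t ht
  obtain ⟨b1, b2⟩ := h2 ε hc hp t ht
  exact ⟨isChainFrom_concat a1 b1, isChainFrom_concat b2 a2⟩

variable {F : Type*} [NormedAddCommGroup F] [NormedSpace ℝ F] (A : F →L[ℝ] F)

theorem pow_apply_comm (n : ℕ) (w : F) : (A^n) (A w) = A ((A^n) w) := by
  rw [← ContinuousLinearMap.mul_apply, ← ContinuousLinearMap.mul_apply, ← pow_succ, ← pow_succ']

theorem nchain_map {S : Set ℕ} {ε : F → ℝ} {x y : F}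
    (h : NChain (fun x y => ‖x - y‖) (fun (n : ℕ) (x : F) => (A ^ n) x) S
      (fun u => ε (A u) * (‖A‖ + 1)⁻¹) x y) :
    NChain (fun x y => ‖x - y‖) (fun (n : ℕ) (x : F) => (A ^ n) x) S ε (A x) (A y) := by
  obtain ⟨k, ts, xs, h0, hl, hS, hd⟩ := h
  refine ⟨k, ts, fun i => A (xs i), by simp only []; rw [h0], by simp only []; rw [hl], hS,
    fun i hi => ?_⟩
  simp only []
  rw [pow_apply_comm, ← map_sub]
  have hA : ‖A‖ < ‖A‖ + 1 := by linarith
  calc ‖A (xs (i+1) - (A ^ ts i) (xs i))‖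
      ≤ ‖A‖ * ‖xs (i+1) - (A ^ ts i) (xs i)‖ := A.le_opNorm _
    _ < (‖A‖ + 1) * (ε (A ((A ^ ts i) (xs i))) * (‖A‖ + 1)⁻¹) := by
        have := hd i hi
        simp only [] at this
        exact mul_lt_mul'' hA this (norm_nonneg A) (norm_nonneg _)
    _ = ε (A ((A ^ ts i) (xs i))) := by
        have : (0:ℝ) < ‖A‖ + 1 := by linarith [norm_nonneg A]
        field_simp

theorem nchain_extend {t : ℝ} {ε : F → ℝ} {x y : F}
    (h : NChain (fun x y => ‖x - y‖) (fun (n : ℕ) (x : F) => (A ^ n) x) {n : ℕ | t < (n:ℝ)}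
      (fun u => min (ε u) (ε (A u) * (‖A‖ + 1)⁻¹)) x y) :
    NChain (fun x y => ‖x - y‖) (fun (n : ℕ) (x : F) => (A ^ n) x) {n : ℕ | t < (n:ℝ)}
      ε x (A y) := by
  obtain ⟨k, ts, xs, h0, hl, hS, hd⟩ := h
  refine ⟨k, fun i => if i = k then ts k + 1 else ts i,
    fun i => if i = k + 1 then A y else xs i, ?_, ?_, ?_, ?_⟩
  · beta_reduce
    rw [if_neg (by omega : ¬ (0 = k + 1))]
    exact h0
  · beta_reduce
    rw [if_pos rfl]
  · intro i hi
    beta_reduce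
    by_cases h1 : i = k
    · rw [if_pos h1]
      have := hS k le_rfl
      simp only [mem_setOf_eq] at this ⊢
      push_cast
      linarith
    · rw [if_neg h1]
      exact hS i hi
  · intro i hi
    beta_reduce
    by_cases h1 : i = k
    · subst h1
      rw [if_pos rfl, if_pos rfl, if_neg (by omega : ¬ (i = i + 1))]
      have step := hd i le_rfl
      simp only [lt_min_iff] at step
      have hA : ‖A‖ < ‖A‖ + 1 := by linarith
      rw [show (A ^ (ts i + 1)) (xs i) = A ((A ^ ts i) (xs i)) by
        rw [← ContinuousLinearMap.mul_apply, ← pow_succ']]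
      rw [show A y - A ((A ^ ts i) (xs i)) = A (y - (A ^ ts i) (xs i)) by rw [map_sub]]
      calc ‖A (y - (A ^ ts i) (xs i))‖
          ≤ ‖A‖ * ‖y - (A ^ ts i) (xs i)‖ := A.le_opNorm _
        _ < (‖A‖ + 1) * (ε (A ((A ^ ts i) (xs i))) * (‖A‖ + 1)⁻¹) := by
            rw [← hl]
            exact mul_lt_mul'' hA step.2 (norm_nonneg A) (norm_nonneg _)
        _ = ε (A ((A ^ ts i) (xs i))) := by
            have : (0:ℝ) < ‖A‖ + 1 := by linarith [norm_nonneg A]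
            field_simp
    · rw [if_neg h1, if_neg (by omega : ¬ (i = k + 1)), if_neg (by omega : ¬ (i + 1 = k + 1))]
      have step := hd i hi
      simp only [lt_min_iff] at step
      exact step.1

theorem nchain_shift {t : ℝ} (ht : 0 < t) {ε : F → ℝ} {x y : F}
    (h : NChain (fun x y => ‖x - y‖) (fun (n : ℕ) (x : F) => (A ^ n) x) {n : ℕ | t + 1 < (n:ℝ)}
      ε x y) :
    NChain (fun x y => ‖x - y‖) (fun (n : ℕ) (x : F) => (A ^ n) x) {n : ℕ | t < (n:ℝ)}
      ε (A x) y := by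
  obtain ⟨k, ts, xs, h0, hl, hS, hd⟩ := h
  refine ⟨k, fun i => if i = 0 then ts 0 - 1 else ts i,
    fun i => if i = 0 then A x else xs i, ?_, ?_, ?_, ?_⟩
  · beta_reduce; rw [if_pos rfl]
  · beta_reduce; rw [if_neg (by omega : ¬ (k + 1 = 0))]; exact hl
  · intro i hi
    beta_reduce
    by_cases h1 : i = 0
    · rw [if_pos h1]
      have := hS 0 (Nat.zero_le k)
      simp only [mem_setOf_eq] at this ⊢
      have h3 : 1 ≤ ts 0 := by
        by_contra hc
        push_neg at hc
        interval_cases h : ts 0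
        · simp_all
          linarith
      push_cast [h3]
      linarith
    · rw [if_neg h1]
      have := hS i hi
      simp only [mem_setOf_eq] at this ⊢
      linarith
  · intro i hi
    beta_reduce
    by_cases h1 : i = 0
    · subst h1
      rw [if_pos rfl, if_pos rfl, if_neg (by omega : ¬ (0 + 1 = 0))]
      have h2 : 1 ≤ ts 0 := by
        have := hS 0 (Nat.zero_le k)
        simp only [mem_setOf_eq] at this
        by_contra hc
        push_neg at hc
        interval_cases h : ts 0
        · simp_all
          linarith
      have key : (A ^ (ts 0 - 1)) (A x) = (A ^ ts 0) x := by
        rw [← ContinuousLinearMap.mul_apply, ← pow_succ]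
        congr 2
        omega
      rw [key]
      have := hd 0 (Nat.zero_le k)
      simp only [] at this
      rw [h0] at this
      exact this
    · simp only [if_neg h1, if_neg (by omega : ¬ (i + 1 = 0))]
      exact hd i hi

theorem nchain_omega {x₀ y z : F}
    (hy : ∃ n : ℕ → ℕ, Tendsto n atTop atTop ∧
      Tendsto (fun k => (A ^ n k) x₀) atTop (nhds y))
    (hz : ∃ n : ℕ → ℕ, Tendsto n atTop atTop ∧
      Tendsto (fun k => (A ^ n k) x₀) atTop (nhds z))
    {ε : F → ℝ} (hεc : Continuous ε) (hεp : ∀ u, 0 < ε u) {t : ℝ} (ht : 0 < t) :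
    NChain (fun x y => ‖x - y‖) (fun (n : ℕ) (x : F) => (A ^ n) x) {n : ℕ | t < (n:ℝ)}
      ε y z := by
  obtain ⟨ny, hny, hcy⟩ := hy
  obtain ⟨nz, hnz, hcz⟩ := hz
  obtain ⟨N₀, hN₀⟩ := exists_nat_gt t
  have hb : (0:ℝ) < ε ((A ^ N₀) y) / (‖(A ^ N₀ : F →L[ℝ] F)‖ + 1) := by
    apply div_pos (hεp _)
    linarith [norm_nonneg (A ^ N₀ : F →L[ℝ] F)]
  obtain ⟨j0, hj0⟩ := Metric.tendsto_atTop.mp hcy _ hb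
  obtain ⟨j, hj⟩ : ∃ j, dist ((A ^ ny j) x₀) y < ε ((A ^ N₀) y) / (‖(A ^ N₀ : F →L[ℝ] F)‖ + 1) :=
    ⟨j0, hj0 j0 le_rfl⟩
  set N : ℕ := N₀ + ny j with hN
  set w : F := (A ^ N) x₀ with hw
  have step1 : ‖w - (A ^ N₀) y‖ < ε ((A ^ N₀) y) := by
    have : w - (A ^ N₀) y = (A ^ N₀) ((A ^ ny j) x₀ - y) := by
      rw [map_sub, hw, hN, pow_add, ContinuousLinearMap.mul_apply]
    rw [this]
    calc ‖(A ^ N₀) ((A ^ ny j) x₀ - y)‖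
        ≤ ‖(A ^ N₀ : F →L[ℝ] F)‖ * ‖(A ^ ny j) x₀ - y‖ := (A ^ N₀).le_opNorm _
      _ < (‖(A ^ N₀ : F →L[ℝ] F)‖ + 1) * (ε ((A ^ N₀) y) / (‖(A ^ N₀ : F →L[ℝ] F)‖ + 1)) := by
          have hdist : ‖(A ^ ny j) x₀ - y‖ < ε ((A ^ N₀) y) / (‖(A ^ N₀ : F →L[ℝ] F)‖ + 1) := by
            have := hj
            rw [dist_eq_norm] at this
            exact this
          exact mul_lt_mul'' (by linarith) hdist (norm_nonneg _) (norm_nonneg _)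
      _ = ε ((A ^ N₀) y) := by
          have : (0:ℝ) < ‖(A ^ N₀ : F →L[ℝ] F)‖ + 1 := by
            linarith [norm_nonneg (A ^ N₀ : F →L[ℝ] F)]
          field_simp
  obtain ⟨r, hr, hball⟩ : ∃ r > 0, ∀ w', dist w' z < r → ε z / 2 < ε w' := by
    have : ContinuousAt ε z := hεc.continuousAt
    obtain ⟨r, hr, h⟩ := Metric.continuousAt_iff.mp this (ε z - ε z / 2) (by linarith [hεp z])
    exact ⟨r, hr, fun w' hw' => by
      have := h hw'
      rw [Real.dist_eq] at this
      have := abs_lt.mp this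
      linarith [this.1]⟩
  have hev1 : ∀ᶠ k in atTop, N + ⌈t⌉₊ + 1 ≤ nz k := hnz.eventually_ge_atTop _
  have hev2 : ∀ᶠ k in atTop, dist ((A ^ nz k) x₀) z < min r (ε z / 2) :=
    Metric.tendsto_nhds.mp hcz _ (lt_min hr (by linarith [hεp z]))
  obtain ⟨k, hk1, hk2⟩ := (hev1.and hev2).exists
  refine ⟨1, fun i => if i = 0 then N₀ else nz k - N,
    fun i => if i = 0 then y else if i = 1 then w else z, rfl, by norm_num, ?_, ?_⟩
  · intro i hi
    beta_reduce
    by_cases h1 : i = 0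
    · rw [if_pos h1]; exact hN₀
    · rw [if_neg h1]
      simp only [mem_setOf_eq]
      have : (⌈t⌉₊ + 1 : ℕ) ≤ nz k - N := by omega
      calc t ≤ ⌈t⌉₊ := Nat.le_ceil t
        _ < (⌈t⌉₊ : ℝ) + 1 := by linarith
        _ ≤ ((nz k - N : ℕ) : ℝ) := by exact_mod_cast this
  · intro i hi
    interval_cases i
    · simpa using step1
    · show ‖z - (A ^ (nz k - N)) w‖ < ε ((A ^ (nz k - N)) w)
      have key : (A ^ (nz k - N)) w = (A ^ nz k) x₀ := by
        rw [hw, ← ContinuousLinearMap.mul_apply, ← pow_add]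
        congr 2
        omega
      rw [key]
      have h1 : ‖z - (A ^ nz k) x₀‖ < ε z / 2 := by
        rw [norm_sub_rev, ← dist_eq_norm]
        exact hk2.trans_le (min_le_right _ _)
      have h2 : ε z / 2 < ε ((A ^ nz k) x₀) :=
        hball _ (hk2.trans_le (min_le_left _ _))
      linarith

/-- Notation-level chain equivalence for the discrete flow of `A`. -/
theorem chainEquiv_map {x y : F}
    (h : ChainEquiv (fun x y => ‖x - y‖) (fun (n : ℕ) (x : F) => (A ^ n) x)
      (fun t => {n : ℕ | t < (n:ℝ)}) x y) :
    ChainEquiv (fun x y => ‖x - y‖) (fun (n : ℕ) (x : F) => (A ^ n) x)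
      (fun t => {n : ℕ | t < (n:ℝ)}) (A x) (A y) := by
  intro ε hεc hεp t ht
  have hδc : Continuous (fun u => ε (A u) * (‖A‖ + 1)⁻¹) :=
    (hεc.comp A.continuous).mul continuous_const
  have hδp : ∀ u, 0 < ε (A u) * (‖A‖ + 1)⁻¹ := fun u =>
    mul_pos (hεp _) (inv_pos.mpr (by linarith [norm_nonneg A]))
  obtain ⟨c1, c2⟩ := h _ hδc hδp t ht
  exact ⟨(nchain_iff _ _ _ _ _ _).mp (nchain_map A ((nchain_iff _ _ _ _ _ _).mpr c1)),
    (nchain_iff _ _ _ _ _ _).mp (nchain_map A ((nchain_iff _ _ _ _ _ _).mpr c2))⟩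

theorem chainEquiv_succ {x : F}
    (h : ChainEquiv (fun x y => ‖x - y‖) (fun (n : ℕ) (x : F) => (A ^ n) x)
      (fun t => {n : ℕ | t < (n:ℝ)}) x x) :
    ChainEquiv (fun x y => ‖x - y‖) (fun (n : ℕ) (x : F) => (A ^ n) x)
      (fun t => {n : ℕ | t < (n:ℝ)}) x (A x) := by
  intro ε hεc hεp t ht
  constructor
  · have hδc : Continuous (fun u => min (ε u) (ε (A u) * (‖A‖ + 1)⁻¹)) :=
      hεc.min ((hεc.comp A.continuous).mul continuous_const)
    have hδp : ∀ u, 0 < min (ε u) (ε (A u) * (‖A‖ + 1)⁻¹) := fun u =>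
      lt_min (hεp _) (mul_pos (hεp _) (inv_pos.mpr (by linarith [norm_nonneg A])))
    have c := (h _ hδc hδp t ht).1
    exact (nchain_iff _ _ _ _ _ _).mp (nchain_extend A ((nchain_iff _ _ _ _ _ _).mpr c))
  · have c := (h ε hεc hεp (t+1) (by linarith)).1
    exact (nchain_iff _ _ _ _ _ _).mp (nchain_shift A ht ((nchain_iff _ _ _ _ _ _).mpr c))

theorem chainEquiv_pow {x : F}
    (h : ChainEquiv (fun x y => ‖x - y‖) (fun (n : ℕ) (x : F) => (A ^ n) x)
      (fun t => {n : ℕ | t < (n:ℝ)}) x x) (m : ℕ) :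
    ChainEquiv (fun x y => ‖x - y‖) (fun (n : ℕ) (x : F) => (A ^ n) x)
      (fun t => {n : ℕ | t < (n:ℝ)}) x ((A ^ m) x) := by
  induction m with
  | zero =>
    simpa [pow_zero, ContinuousLinearMap.one_apply] using h
  | succ m ih =>
    have hself : ChainEquiv (fun x y => ‖x - y‖) (fun (n : ℕ) (x : F) => (A ^ n) x)
        (fun t => {n : ℕ | t < (n:ℝ)}) ((A ^ m) x) ((A ^ m) x) :=
      chainEquiv_trans (chainEquiv_symm ih) ih
    have hstep := chainEquiv_succ A hself
    have : A ((A ^ m) x) = (A ^ (m+1)) x := by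
      rw [← ContinuousLinearMap.mul_apply, ← pow_succ']
    rw [this] at hstep
    exact chainEquiv_trans ih hstep

end NChainSec

section AnalyticSec

open Set

variable {F : Type*} [NormedAddCommGroup F] [NormedSpace ℝ F] [CompleteSpace F]

theorem g_period_aux (X g : ℝ → F →L[ℝ] F)
    (hX : Continuous X) (hXper : ∀ t, X (t + 1) = X t)
    (hg0 : g 0 = 1) (hg : ∀ t, HasDerivAt g (X t ∘L g t) t) :
    ∀ t, g (t + 1) = g t * g 1 := by
  intro t
  have hper : Function.Periodic X 1 := hXper
  obtain ⟨C, hC⟩ : ∃ C, ∀ s, ‖X s‖ ≤ C := by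
    obtain ⟨x₀, _, hx₀⟩ := (isCompact_Icc (a := (0:ℝ)) (b := 1)).exists_isMaxOn
      (nonempty_Icc.mpr zero_le_one) (hX.norm.continuousOn)
    refine ⟨‖X x₀‖, fun s => ?_⟩
    have h1 : X s = X (Int.fract s) := by
      have := hper.sub_int_mul_eq (x := s) (n := ⌊s⌋)
      rw [← this]
      congr 1
      rw [Int.fract]; ring
    rw [h1]
    exact hx₀ ⟨Int.fract_nonneg s, (Int.fract_lt_one s).le⟩
  have hC0 : 0 ≤ C := le_trans (norm_nonneg _) (hC 0)
  set K : NNReal := ⟨C, hC0⟩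
  have hlip : ∀ s : ℝ, LipschitzOnWith K (fun A : F →L[ℝ] F => X s * A) univ := by
    intro s
    apply LipschitzOnWith.of_dist_le_mul
    intro A _ B _
    rw [dist_eq_norm, dist_eq_norm, ← mul_sub]
    calc ‖X s * (A - B)‖ ≤ ‖X s‖ * ‖A - B‖ := norm_mul_le _ _
    _ ≤ C * ‖A - B‖ := by gcongr; exact hC s
  obtain ⟨R, hR1, hR2⟩ : ∃ R, |t| < R ∧ (0:ℝ) < R :=
    ⟨|t| + 1, by linarith [abs_nonneg t], by linarith [abs_nonneg t]⟩
  have key : EqOn (fun s => g (s + 1)) (fun s => g s * g 1) (Ioo (-R) R) := by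
    apply ODE_solution_unique_of_mem_Ioo (v := fun s A => X s * A) (s := fun _ => univ)
      (hv := fun s _ => hlip s) (t₀ := 0) (ht := ⟨by linarith, hR2⟩)
    · intro s _
      refine ⟨?_, trivial⟩
      have h1 : HasDerivAt (fun s => g (s + 1)) (X (s+1) ∘L g (s+1)) s := by
        have h0 : HasDerivAt (fun u : ℝ => u + 1) 1 s := (hasDerivAt_id s).add_const 1
        have := HasDerivAt.scomp (x := s) (hg (s + 1)) h0
        simpa [Function.comp_def] using this
      rw [hXper] at h1
      exact h1
    · intro s _
      refine ⟨?_, trivial⟩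
      exact (hg s).mul_const (g 1)
    · simp [hg0]
  have := key (x := t) ⟨by cases abs_lt.mp hR1; linarith, (abs_lt.mp hR1).2⟩
  simpa using this

theorem ginv_continuous_aux (g ginv : ℝ → F →L[ℝ] F)
    (hgC : Continuous g)
    (hinv : ∀ s, g s ∘L ginv s = 1 ∧ ginv s ∘L g s = 1) :
    Continuous ginv := by
  rw [continuous_iff_continuousAt]
  intro s
  have hu : ∀ r, ginv r = Ring.inverse (g r) := fun r =>
    (Ring.inverse_unit ⟨g r, ginv r, (hinv r).1, (hinv r).2⟩).symm
  have h1 : ContinuousAt Ring.inverse (g s) :=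
    NormedRing.inverse_continuousAt ⟨g s, ginv s, (hinv s).1, (hinv s).2⟩
  exact ContinuousAt.congr (h1.comp hgC.continuousAt)
    (Filter.Eventually.of_forall fun r => (hu r).symm)

end AnalyticSec

/-- If `M` is a chain transitive component of the discrete flow of `g = g 1`, then the
stable set of `S¹ ×_g M` under the skew-product flow equals `S¹ ×_g st(M)`. -/
theorem stable_set_skew_product
    {F : Type*} [NormedAddCommGroup F] [NormedSpace ℝ F] [CompleteSpace F]
    (X g ginv : ℝ → F →L[ℝ] F)
    (hX : Continuous X) (hXper : ∀ t, X (t + 1) = X t)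
    (hg0 : g 0 = 1) (hg : ∀ t, HasDerivAt g (X t ∘L g t) t)
    (hinv : ∀ s, g s ∘L ginv s = 1 ∧ ginv s ∘L g s = 1)
    (φ : ℝ → UnitAddCircle × F → UnitAddCircle × F)
    (hφ : ∀ (t s : ℝ) (x : F),
      φ t ((s : UnitAddCircle), x) = (((s + t : ℝ) : UnitAddCircle), g (t + s) (ginv s x)))
    (M : Set F)
    (hM : M ∈ ChainComponents (fun x y => ‖x - y‖) (fun (n : ℕ) (x : F) => (g 1 ^ n) x)
      (fun t => {n : ℕ | t < (n : ℝ)})) :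
    {p : UnitAddCircle × F |
        {q | ∃ u : ℕ → ℝ, Tendsto u atTop atTop ∧
            Tendsto (fun k => φ (u k) p) atTop (nhds q)} ⊆
          ⋃ s : ℝ, (fun y => ((s : UnitAddCircle), y)) '' (g s '' M)} =
      ⋃ s : ℝ, (fun y => ((s : UnitAddCircle), y)) ''
        (g s '' {x : F | {y | ∃ n : ℕ → ℕ, Tendsto n atTop atTop ∧
            Tendsto (fun k => (g 1 ^ n k) x) atTop (nhds y)} ⊆ M}) := by
  classical
  obtain ⟨xb, hxb, hMeq⟩ := hM
  have hgC : Continuous g := continuous_iff_continuousAt.mpr fun t => (hg t).continuousAt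
  have hginvC : Continuous ginv := ginv_continuous_aux g ginv hgC hinv
  have hper := g_period_aux X g hX hXper hg0 hg
  have hgapp : ∀ s x, g s (ginv s x) = x := by
    intro s x
    rw [← ContinuousLinearMap.comp_apply, (hinv s).1, ContinuousLinearMap.one_apply]
  have hginvapp : ∀ s x, ginv s (g s x) = x := by
    intro s x
    rw [← ContinuousLinearMap.comp_apply, (hinv s).2, ContinuousLinearMap.one_apply]
  have hginj : ∀ s (a b : F), g s a = g s b → a = b := by
    intro s a b hab
    have := congrArg (ginv s) hab
    rwa [hginvapp, hginvapp] at this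
  have hgadd : ∀ (t : ℝ) (n : ℕ), g (t + n) = g t * (g 1)^n := by
    intro t n
    induction n with
    | zero => simp
    | succ n ih =>
      have h1 : (t + ((n+1 : ℕ) : ℝ)) = (t + n) + 1 := by push_cast; ring
      rw [h1, hper (t + n), ih, mul_assoc, ← pow_succ]
  have hcoeadd : ∀ (s : ℝ) (n : ℕ), ((s + n : ℝ) : UnitAddCircle) = (s : UnitAddCircle) := by
    intro s n
    rw [QuotientAddGroup.eq]
    exact AddSubgroup.mem_zmultiples_iff.mpr ⟨-n, by simp [zsmul_eq_mul]⟩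
  ext p
  constructor
  · -- forward inclusion
    intro hp
    obtain ⟨s, hs⟩ := Quotient.exists_rep p.1
    rw [Set.mem_iUnion]
    refine ⟨s, g s (ginv s p.2), ⟨ginv s p.2, ?_, rfl⟩, ?_⟩
    swap
    · show ((s : UnitAddCircle), g s (ginv s p.2)) = p
      rw [hgapp]
      exact Prod.ext hs rfl
    · -- stable set membership
      intro y hy
      obtain ⟨n, hn, hcn⟩ := hy
      set x₀ : F := ginv s p.2 with hx₀
      have hyω : ∃ nn : ℕ → ℕ, Tendsto nn atTop atTop ∧
          Tendsto (fun k => ((g 1) ^ nn k) x₀) atTop (nhds y) := ⟨n, hn, hcn⟩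
      have hq : (p.1, g s y) ∈ {q | ∃ u : ℕ → ℝ, Tendsto u atTop atTop ∧
          Tendsto (fun k => φ (u k) p) atTop (nhds q)} := by
        refine ⟨fun k => (n k : ℝ), tendsto_natCast_atTop_atTop.comp hn, ?_⟩
        have hrw : ∀ k, φ ((n k : ℝ)) p = (p.1, g s ((g 1 ^ n k) x₀)) := by
          intro k
          have hp2 : p = ((s : UnitAddCircle), p.2) := Prod.ext hs.symm rfl
          rw [hp2, hφ]
          refine Prod.ext ?_ ?_
          · show ((s + (n k : ℝ) : ℝ) : UnitAddCircle) = ((s : UnitAddCircle), p.2).1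
            rw [hcoeadd s (n k)]
          · show g ((n k : ℝ) + s) (ginv s p.2) = g s ((g 1 ^ n k) x₀)
            rw [add_comm, hgadd s (n k), ContinuousLinearMap.mul_apply, hx₀]
        refine Tendsto.congr (fun k => (hrw k).symm) ?_
        exact tendsto_const_nhds.prodMk_nhds (((g s).continuous.tendsto y).comp hcn)
      have hmem := hp hq
      rw [Set.mem_iUnion] at hmem
      obtain ⟨σ, b, ⟨w, hwM, rfl⟩, hb2⟩ := hmem
      have hσs : (σ : UnitAddCircle) = (s : UnitAddCircle) := by
        have := congrArg Prod.fst hb2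
        simp only at this
        rw [this, ← hs]
      have hgy : g σ w = g s y := congrArg Prod.snd hb2
      obtain ⟨m, hm⟩ : ∃ m : ℤ, s = σ + m := by
        rw [QuotientAddGroup.eq] at hσs
        obtain ⟨m, hmm⟩ := AddSubgroup.mem_zmultiples_iff.mp hσs
        simp only [zsmul_eq_mul, mul_one] at hmm
        exact ⟨m, by linarith⟩
      rw [hMeq] at hwM
      rw [hMeq]
      rcases le_or_gt 0 m with hm0 | hm0
      · -- s = σ + m with m ≥ 0 : w = (g1)^m' y, use ω-limit chains
        set m' : ℕ := m.toNat with hm'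
        have hsm : s = σ + (m' : ℝ) := by
          rw [hm]; congr 1
          exact_mod_cast (Int.toNat_of_nonneg hm0).symm
        have hgs : g s = g σ * (g 1)^m' := by rw [hsm]; exact hgadd σ m'
        have hww : w = ((g 1) ^ m') y := by
          apply hginj σ
          rw [hgy, hgs, ContinuousLinearMap.mul_apply]
        have hwω : ∃ nn : ℕ → ℕ, Tendsto nn atTop atTop ∧
            Tendsto (fun k => ((g 1) ^ nn k) x₀) atTop (nhds w) := by
          refine ⟨fun k => n k + m', tendsto_atTop_mono (fun k => Nat.le_add_right _ _) hn, ?_⟩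
          have : ∀ k, ((g 1) ^ (n k + m')) x₀ = ((g 1) ^ m') (((g 1) ^ n k) x₀) := by
            intro k
            rw [add_comm, pow_add, ContinuousLinearMap.mul_apply]
          refine Tendsto.congr (fun k => (this k).symm) ?_
          rw [hww]
          exact ((g 1 ^ m' : F →L[ℝ] F).continuous.tendsto y).comp hcn
        constructor
        · intro ε hεc hεp t ht
          exact ⟨(nchain_iff _ _ _ _ _ _).mp (nchain_omega (g 1) hyω hyω hεc hεp ht),
            (nchain_iff _ _ _ _ _ _).mp (nchain_omega (g 1) hyω hyω hεc hεp ht)⟩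
        · intro ε hεc hεp t ht
          refine ⟨isChainFrom_concat ((hwM.2 ε hεc hεp t ht).1) ?_,
            isChainFrom_concat ?_ ((hwM.2 ε hεc hεp t ht).2)⟩
          · exact (nchain_iff _ _ _ _ _ _).mp (nchain_omega (g 1) hwω hyω hεc hεp ht)
          · exact (nchain_iff _ _ _ _ _ _).mp (nchain_omega (g 1) hyω hwω hεc hεp ht)
      · -- σ = s + k with k ≥ 1 : y = (g1)^k w, use forward invariance
        set kk : ℕ := (-m).toNat with hkk
        have hσeq : σ = s + (kk : ℝ) := by
          rw [hm]
          have : ((kk : ℕ) : ℝ) = -(m : ℝ) := by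
            exact_mod_cast (Int.toNat_of_nonneg (by omega : (0:ℤ) ≤ -m)).symm ▸
              (by push_cast; ring : ((-m : ℤ) : ℝ) = -(m:ℝ))
          rw [this]; ring
        have hgσ : g σ = g s * (g 1)^kk := by rw [hσeq]; exact hgadd s kk
        have hyw : y = ((g 1) ^ kk) w := by
          apply hginj s
          rw [← hgy, hgσ, ContinuousLinearMap.mul_apply]
        have h1 := chainEquiv_pow (g 1) hwM.1 kk
        rw [← hyw] at h1
        exact ⟨chainEquiv_trans (chainEquiv_symm h1) h1, chainEquiv_trans hwM.2 h1⟩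
  · -- reverse inclusion
    intro hp
    rw [Set.mem_iUnion] at hp
    obtain ⟨s, b, ⟨x, hxSt, rfl⟩, hpb⟩ := hp
    have hpb' : ((s : UnitAddCircle), g s x) = p := hpb
    subst hpb'
    intro q hq
    obtain ⟨u, hu, hcu⟩ := hq
    have hφrw : ∀ k, φ (u k) ((s : UnitAddCircle), g s x) =
        (((s + u k : ℝ) : UnitAddCircle), g (u k + s) x) := by
      intro k
      rw [hφ, hginvapp]
    have hc2 : Tendsto (fun k => (((s + u k : ℝ) : UnitAddCircle), g (u k + s) x))
        atTop (nhds q) := Tendsto.congr hφrw hcu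
    have h1 : Tendsto (fun k => ((s + u k : ℝ) : UnitAddCircle)) atTop (nhds q.1) :=
      (continuous_fst.tendsto q).comp hc2
    have h2 : Tendsto (fun k => g (s + u k) x) atTop (nhds q.2) := by
      have h2' : Tendsto (fun k => g (u k + s) x) atTop (nhds q.2) :=
        (continuous_snd.tendsto q).comp hc2
      exact Tendsto.congr (fun k => by rw [add_comm (u k) s]) h2'
    obtain ⟨σ, hσ0⟩ := Quotient.exists_rep q.1
    have hσ : ((σ : ℝ) : UnitAddCircle) = q.1 := hσ0
    set δ : ℕ → ℝ := fun k => s + u k - σ - round (s + u k - σ) with hδdef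
    set mZ : ℕ → ℤ := fun k => round (s + u k - σ) with hmZdef
    have hδ0 : Tendsto δ atTop (nhds 0) := by
      rw [tendsto_zero_iff_norm_tendsto_zero]
      have hdist : Tendsto (fun k => dist (((s + u k : ℝ) : UnitAddCircle))
          ((σ : ℝ) : UnitAddCircle)) atTop (nhds 0) := by
        rw [hσ]
        exact tendsto_iff_dist_tendsto_zero.mp h1
      refine Tendsto.congr (fun k => ?_) hdist
      rw [dist_eq_norm]
      have e1 : ((s + u k : ℝ) : UnitAddCircle) - ((σ : ℝ) : UnitAddCircle) =
          ((s + u k - σ : ℝ) : UnitAddCircle) := by norm_cast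
      rw [e1, UnitAddCircle.norm_eq]
      rw [Real.norm_eq_abs]
    have hmZR : Tendsto (fun k => (mZ k : ℝ)) atTop atTop := by
      apply tendsto_atTop_mono (f := fun k => s + u k - σ - 1)
      · intro k
        have := abs_sub_round (s + u k - σ)
        have h := abs_le.mp this
        simp only [hmZdef]
        linarith [h.1]
      · have : Tendsto (fun k => u k + (s - σ - 1)) atTop atTop :=
          tendsto_atTop_add_const_right _ _ hu
        refine Tendsto.congr (fun k => by ring) this
    set nn : ℕ → ℕ := fun k => (mZ k).toNat with hnndef
    have hnk : Tendsto nn atTop atTop := by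
      rw [tendsto_atTop]
      intro b
      filter_upwards [hmZR.eventually_ge_atTop (b : ℝ)] with k hk
      have hbk : (b : ℤ) ≤ mZ k := by exact_mod_cast hk
      simp only [hnndef]
      omega
    have hconv : Tendsto (fun k => ((g 1) ^ nn k) x) atTop (nhds (ginv σ q.2)) := by
      have hδσ : Tendsto (fun k => ginv (σ + δ k)) atTop (nhds (ginv σ)) := by
        have : Tendsto (fun k => σ + δ k) atTop (nhds σ) := by
          simpa using tendsto_const_nhds.add hδ0
        exact (hginvC.tendsto σ).comp this
      have happ : Tendsto (fun k => (ginv (σ + δ k)) (g (s + u k) x)) atTop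
          (nhds ((ginv σ) q.2)) := by
        have := (isBoundedBilinearMap_apply (𝕜 := ℝ) (E := F) (F := F)).continuous.tendsto
          ((ginv σ, q.2))
        exact this.comp (hδσ.prodMk_nhds h2)
      refine Tendsto.congr' ?_ happ
      filter_upwards [hmZR.eventually_ge_atTop 0] with k hk
      have hk0 : (0 : ℤ) ≤ mZ k := by exact_mod_cast hk
      have hcast : ((nn k : ℕ) : ℝ) = (mZ k : ℝ) := by
        simp only [hnndef]
        exact_mod_cast congrArg (Int.cast : ℤ → ℝ) (Int.toNat_of_nonneg hk0)
      have hsplit : s + u k = (σ + δ k) + (nn k : ℝ) := by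
        simp only [hδdef, hcast, hmZdef]
        ring
      rw [hsplit, hgadd (σ + δ k) (nn k), ContinuousLinearMap.mul_apply, hginvapp]
    have hmemM : ginv σ q.2 ∈ M := hxSt ⟨nn, hnk, hconv⟩
    rw [Set.mem_iUnion]
    refine ⟨σ, g σ (ginv σ q.2), ⟨ginv σ q.2, hmemM, rfl⟩, ?_⟩
    show ((σ : UnitAddCircle), g σ (ginv σ q.2)) = q
    rw [hgapp]
    exact Prod.ext hσ rfl
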